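/- (Hörmander condition, general case) Let 𝔤 be the smallest ℝ-linear subspace of the space of smooth vector fields on ℝ^N that contains D_0, D_1, …, D_n and is closed under the Lie bracket operation. Then for every φ ∈ ℝ^N, the set of vectors {W(φ) : W ∈ 𝔤} spans all of ℝ^N. -/

import Mathlib

open scoped BigOperators

noncomputable section

/-- Vector fields on `ℝ^N`. -/
abbrev VF (N : ℕ) := (Fin N → ℝ) → Fin N → ℝ

/-- The Lie bracket `[V,W](φ) = DW(φ)(V(φ)) − DV(φ)(W(φ))` of vector fields. -/
def lieBracket {N : ℕ} (V W : VF N) : VF N :=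
  fun φ => fderiv ℝ W φ (V φ) - fderiv ℝ V φ (W φ)

/-- The drift vector field `D₀`. -/
def Dfield0 {N : ℕ} (lam μ : ℝ) (k : ℕ) : VF N :=
  fun φ i => (lam - (k : ℝ) * μ ^ 2 / 2) * φ i + lam

/-- The diffusion vector fields `D_j`, `1 ≤ j ≤ n`. -/
def DfieldJ {n N : ℕ} (μ : ℝ) (S : Fin N → Finset (Fin n)) (j : Fin n) : VF N :=
  fun φ i => (μ / Real.sqrt 2) * (φ i * if j ∈ S i then 1 else 0)

/-- The drift vector field `D₀` in the general case, whose `i`-th coefficient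
involves the cardinality of `S i`. -/
def DfieldGen0 {n N : ℕ} (lam μ : ℝ) (S : Fin N → Finset (Fin n)) : VF N :=
  fun φ i => (lam - ((S i).card : ℝ) * μ ^ 2 / 2) * φ i + lam

namespace HormAux

variable {n N : ℕ}

/-- Diagonal continuous linear map. -/
def diagCLM (d : Fin N → ℝ) : (Fin N → ℝ) →L[ℝ] (Fin N → ℝ) :=
  ContinuousLinearMap.pi fun i => d i • ContinuousLinearMap.proj i

@[simp] lemma diagCLM_apply (d φ : Fin N → ℝ) (i : Fin N) :
    diagCLM d φ i = d i * φ i := rfl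

lemma fderiv_DfieldJ (μ : ℝ) (S : Fin N → Finset (Fin n)) (j : Fin n) (φ : Fin N → ℝ) :
    fderiv ℝ (DfieldJ μ S j) φ
      = diagCLM (fun i => (μ / Real.sqrt 2) * (if j ∈ S i then 1 else 0)) := by
  have h : DfieldJ μ S j
      = fun ψ => diagCLM (fun i => (μ / Real.sqrt 2) * (if j ∈ S i then 1 else 0)) ψ := by
    funext ψ i
    simp only [DfieldJ, diagCLM_apply]
    ring
  rw [h]
  exact (diagCLM _).fderiv

lemma fderiv_DfieldGen0 (lam μ : ℝ) (S : Fin N → Finset (Fin n)) (φ : Fin N → ℝ) :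
    fderiv ℝ (DfieldGen0 lam μ S) φ
      = diagCLM (fun i => lam - ((S i).card : ℝ) * μ ^ 2 / 2) := by
  have h : DfieldGen0 lam μ S
      = fun ψ => diagCLM (fun i => lam - ((S i).card : ℝ) * μ ^ 2 / 2) ψ
          + (fun _ : Fin N => lam) := by
    funext ψ i
    simp only [DfieldGen0, Pi.add_apply, diagCLM_apply]
  rw [h]
  exact (((diagCLM _).hasFDerivAt).add_const _).fderiv

/-- The indicator vector of the condition `T ⊆ S i`. -/
def indV (S : Fin N → Finset (Fin n)) (T : Finset (Fin n)) : Fin N → ℝ :=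
  fun i => if T ⊆ S i then 1 else 0

lemma bracket_J0 (lam μ : ℝ) (S : Fin N → Finset (Fin n)) (j : Fin n) :
    lieBracket (DfieldJ μ S j) (DfieldGen0 lam μ S)
      = fun _ i => (-(lam * (μ / Real.sqrt 2))) * (if j ∈ S i then 1 else 0) := by
  funext φ i
  simp only [lieBracket, fderiv_DfieldJ, fderiv_DfieldGen0, Pi.sub_apply, diagCLM_apply,
    DfieldJ, DfieldGen0]
  ring

lemma bracket_const_J (μ : ℝ) (S : Fin N → Finset (Fin n)) (j : Fin n) (v : Fin N → ℝ) :
    lieBracket (fun _ => v) (DfieldJ μ S j)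
      = fun _ i => (μ / Real.sqrt 2) * (v i * if j ∈ S i then 1 else 0) := by
  funext φ i
  simp only [lieBracket, fderiv_DfieldJ, fderiv_fun_const, Pi.zero_apply, Pi.sub_apply,
    diagCLM_apply, ContinuousLinearMap.zero_apply]
  ring

lemma const_mem (lam μ : ℝ) (hμ : μ ≠ 0) (hlam : 0 < lam)
    (S : Fin N → Finset (Fin n)) (G : Set (VF N))
    (h0 : DfieldGen0 lam μ S ∈ G) (hj : ∀ j : Fin n, DfieldJ μ S j ∈ G)
    (hsmul : ∀ (a : ℝ), ∀ V ∈ G, a • V ∈ G)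
    (hbr : ∀ V ∈ G, ∀ W ∈ G, lieBracket V W ∈ G) :
    ∀ (T : Finset (Fin n)), T.Nonempty → (fun _ => indV S T) ∈ G := by
  have hc : (μ / Real.sqrt 2) ≠ 0 := by
    have h2 : Real.sqrt 2 ≠ 0 := by positivity
    exact div_ne_zero hμ h2
  intro T hT
  induction hT using Finset.Nonempty.cons_induction with
  | singleton j =>
    have key := hbr _ (hj j) _ h0
    have heq : (fun _ : Fin N → ℝ => indV S {j})
        = (-(lam * (μ / Real.sqrt 2)))⁻¹ • lieBracket (DfieldJ μ S j) (DfieldGen0 lam μ S) := by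
      rw [bracket_J0]
      funext φ i
      have hne : (-(lam * (μ / Real.sqrt 2))) ≠ 0 := by
        simp only [neg_ne_zero]
        exact mul_ne_zero (ne_of_gt hlam) hc
      simp only [indV, Pi.smul_apply, smul_eq_mul, Finset.singleton_subset_iff]
      rw [← mul_assoc, inv_mul_cancel₀ hne, one_mul]
    rw [heq]
    exact hsmul _ _ key
  | cons a T ha hT ih =>
    have key := hbr _ ih _ (hj a)
    have heq : (fun _ : Fin N → ℝ => indV S (Finset.cons a T ha))
        = (μ / Real.sqrt 2)⁻¹ • lieBracket (fun _ => indV S T) (DfieldJ μ S a) := by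
      rw [bracket_const_J]
      funext φ i
      simp only [indV, Pi.smul_apply, smul_eq_mul, Finset.cons_subset]
      rw [← mul_assoc, inv_mul_cancel₀ hc, one_mul]
      by_cases h1 : a ∈ S i <;> by_cases h2 : T ⊆ S i <;> simp [h1, h2]
    rw [heq]
    exact hsmul _ _ key

lemma single_eq_sum (S : Fin N → Finset (Fin n)) (hSinj : Function.Injective S)
    (i0 : Fin N) :
    (Pi.single i0 1 : Fin N → ℝ)
      = ∑ U ∈ ((Finset.univ : Finset (Fin n)) \ S i0).powerset,
          ((-1 : ℝ) ^ U.card) • indV S (S i0 ∪ U) := by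
  funext i
  rw [Finset.sum_apply]
  simp only [Pi.smul_apply, indV, smul_eq_mul]
  by_cases h : S i0 ⊆ S i
  · have key : ∀ U ∈ ((Finset.univ : Finset (Fin n)) \ S i0).powerset,
        ((-1 : ℝ) ^ U.card * if S i0 ∪ U ⊆ S i then 1 else 0)
          = if U ∈ (S i \ S i0).powerset then (-1 : ℝ) ^ U.card else 0 := by
      intro U hU
      rw [Finset.mem_powerset] at hU
      by_cases hUi : U ⊆ S i \ S i0
      · have : S i0 ∪ U ⊆ S i := by
          refine Finset.union_subset h (hUi.trans ?_)
          exact Finset.sdiff_subset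
        simp [this, hUi]
      · have : ¬ (S i0 ∪ U ⊆ S i) := by
          intro hcon
          apply hUi
          intro x hx
          rw [Finset.mem_sdiff]
          refine ⟨hcon (Finset.mem_union_right _ hx), ?_⟩
          have := hU hx
          rw [Finset.mem_sdiff] at this
          exact this.2
        simp [this, hUi]
    rw [Finset.sum_congr rfl key, Finset.sum_ite_mem]
    have hinter : ((Finset.univ : Finset (Fin n)) \ S i0).powerset ∩ (S i \ S i0).powerset
        = (S i \ S i0).powerset := by
      rw [Finset.inter_eq_right]
      exact Finset.powerset_mono.2 (by
        intro x hx
        rw [Finset.mem_sdiff] at hx ⊢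
        exact ⟨Finset.mem_univ x, hx.2⟩)
    rw [hinter]
    have hz := @Finset.sum_powerset_neg_one_pow_card (Fin n) _ (S i \ S i0)
    have hzr : (∑ m ∈ (S i \ S i0).powerset, (-1 : ℝ) ^ m.card)
        = if S i \ S i0 = ∅ then 1 else 0 := by
      have := congrArg (fun z : ℤ => (z : ℝ)) hz
      push_cast at this
      convert this using 2 <;> simp
    rw [hzr]
    by_cases hi : i = i0
    · subst hi
      simp
    · have : S i \ S i0 ≠ ∅ := by
        intro hcon
        have hsub : S i ⊆ S i0 := Finset.sdiff_eq_empty_iff_subset.mp hcon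
        exact hi (hSinj (le_antisymm hsub h))
      simp [this, Pi.single_eq_of_ne hi]
  · have hi : i ≠ i0 := by
      intro hcon
      exact h (by rw [hcon])
    have : ∀ U ∈ ((Finset.univ : Finset (Fin n)) \ S i0).powerset,
        ((-1 : ℝ) ^ U.card * if S i0 ∪ U ⊆ S i then 1 else 0) = 0 := by
      intro U _
      have : ¬ (S i0 ∪ U ⊆ S i) := fun hcon => h ((Finset.subset_union_left).trans hcon)
      simp [this]
    rw [Finset.sum_congr rfl this, Finset.sum_const_zero, Pi.single_eq_of_ne hi]

end HormAux

open HormAux in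
theorem hormander_condition_general_case
    (n N : ℕ) (hn : 2 ≤ n)
    (S : Fin N → Finset (Fin n)) (hSinj : Function.Injective S)
    (hSne : ∀ i, (S i).Nonempty)
    (μ lam : ℝ) (hμ : μ ≠ 0) (hlam : 0 < lam) :
    ∀ φ : Fin N → ℝ,
      Submodule.span ℝ ((fun W : VF N => W φ) ''
        (⋂₀ {G : Set (VF N) |
          (∀ W ∈ G, ContDiff ℝ (⊤ : ℕ∞) W) ∧
          DfieldGen0 lam μ S ∈ G ∧ (∀ j : Fin n, DfieldJ μ S j ∈ G) ∧
          (∀ V ∈ G, ∀ W ∈ G, V + W ∈ G) ∧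
          (∀ (a : ℝ), ∀ V ∈ G, a • V ∈ G) ∧
          (∀ V ∈ G, ∀ W ∈ G, lieBracket V W ∈ G)})) = ⊤ := by
  intro φ
  rw [eq_top_iff]
  rintro x -
  set Im := ((fun W : VF N => W φ) ''
        (⋂₀ {G : Set (VF N) |
          (∀ W ∈ G, ContDiff ℝ (⊤ : ℕ∞) W) ∧
          DfieldGen0 lam μ S ∈ G ∧ (∀ j : Fin n, DfieldJ μ S j ∈ G) ∧
          (∀ V ∈ G, ∀ W ∈ G, V + W ∈ G) ∧
          (∀ (a : ℝ), ∀ V ∈ G, a • V ∈ G) ∧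
          (∀ V ∈ G, ∀ W ∈ G, lieBracket V W ∈ G)})) with hIm
  have hind : ∀ (T : Finset (Fin n)), T.Nonempty → indV S T ∈ Im := by
    intro T hT
    refine ⟨fun _ => indV S T, ?_, rfl⟩
    intro G hG
    obtain ⟨-, h0, hj, -, hsmul, hbr⟩ := hG
    exact const_mem lam μ hμ hlam S G h0 hj hsmul hbr T hT
  have hspan : ∀ (T : Finset (Fin n)), T.Nonempty →
      indV S T ∈ Submodule.span ℝ Im := fun T hT => Submodule.subset_span (hind T hT)
  have hsingle : ∀ i0 : Fin N, (Pi.single i0 1 : Fin N → ℝ) ∈ Submodule.span ℝ Im := by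
    intro i0
    rw [single_eq_sum S hSinj i0]
    refine Submodule.sum_mem _ fun U hU => Submodule.smul_mem _ _ (hspan _ ?_)
    exact (hSne i0).mono Finset.subset_union_left
  have hx : x = ∑ i, x i • (Pi.single i 1 : Fin N → ℝ) := by
    funext j
    rw [Finset.sum_apply]
    simp [Pi.single_apply]
  rw [hx]
  exact Submodule.sum_mem _ fun i _ => Submodule.smul_mem _ _ (hsingle i)

end
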